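/- For all integers r ≥ 1 and s ≥ 0 and every ε > 0 there exists a constant c = c(r, s, ε) > 0 such that the following holds. Let z_1, …, z_r ∈ ℝ satisfy |z_i − z_j| ≥ ε for all i ≠ j, let α_{i,j} ∈ ℂ for i ∈ {1,…,r} and j ∈ {0,…,s}, and set F(θ) = ∑_{i=1}^r ∑_{j=0}^s α_{i,j} θ^j e^{i z_i θ}. Then ∫_0^1 |F(θ)|² dθ ≥ c · ∑_{i=1}^r ∑_{j=0}^s |α_{i,j}|². -/

import Mathlib

open MeasureTheory Real Finset Polynomial

noncomputable def Complex.abs : AbsoluteValue ℂ ℝ where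
  toFun := fun z => ‖z‖
  map_mul' := norm_mul
  nonneg' := norm_nonneg
  eq_zero' := fun _ => norm_eq_zero
  add_le' := norm_add_le

lemma Complex.norm_eq_abs (z : ℂ) : ‖z‖ = Complex.abs z := rfl

lemma Complex.abs_ofReal (x : ℝ) : Complex.abs (x : ℂ) = |x| := Complex.norm_real x

lemma Complex.abs_I : Complex.abs Complex.I = 1 := Complex.norm_I

lemma Complex.abs_conj (z : ℂ) : Complex.abs ((starRingEnd ℂ) z) = Complex.abs z :=
  Complex.norm_conj z

lemma Complex.abs_exp (z : ℂ) : Complex.abs (Complex.exp z) = Real.exp z.re :=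
  Complex.norm_exp z

lemma Complex.continuous_abs : Continuous Complex.abs := continuous_norm

lemma Complex.sq_abs (z : ℂ) : Complex.abs z ^ 2 = Complex.normSq z := Complex.sq_norm z

lemma Complex.abs_natCast (n : ℕ) : Complex.abs (n : ℂ) = n := Complex.norm_natCast n

lemma Complex.abs_re_le_abs (z : ℂ) : |z.re| ≤ Complex.abs z := Complex.abs_re_le_norm z

namespace S15


noncomputable def Fn (s : ℕ) {r : ℕ} (A : Finset (Fin r)) (z : Fin r → ℝ)
    (α : Fin r → Fin (s + 1) → ℂ) (θ : ℝ) : ℂ :=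
  ∑ i ∈ A, ∑ j : Fin (s + 1), α i j * (θ : ℂ) ^ (j : ℕ) *
    Complex.exp (Complex.I * (z i : ℂ) * (θ : ℂ))

noncomputable def Qn (s : ℕ) {r : ℕ} (A : Finset (Fin r)) (z : Fin r → ℝ)
    (α : Fin r → Fin (s + 1) → ℂ) : ℝ :=
  ∫ θ in (0:ℝ)..1, Complex.abs (Fn s A z α θ) ^ 2

noncomputable def Sg (s : ℕ) {r : ℕ} (A : Finset (Fin r))
    (α : Fin r → Fin (s + 1) → ℂ) : ℝ :=
  ∑ i ∈ A, ∑ j : Fin (s + 1), Complex.abs (α i j) ^ 2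


variable {s r : ℕ} {A : Finset (Fin r)} {z : Fin r → ℝ} {α : Fin r → Fin (s + 1) → ℂ}
  {p : Fin r → Polynomial ℂ}

lemma Fn_continuous : Continuous (Fn s A z α) := by
  unfold Fn
  refine continuous_finset_sum _ fun i _ => continuous_finset_sum _ fun j _ => ?_
  fun_prop

lemma Sg_nonneg : 0 ≤ Sg s A α :=
  Finset.sum_nonneg fun i _ => Finset.sum_nonneg fun j _ => sq_nonneg _

lemma integrand_continuous : Continuous fun θ => Complex.abs (Fn s A z α θ) ^ 2 :=
  (Complex.continuous_abs.comp Fn_continuous).pow 2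

lemma Qn_nonneg : 0 ≤ Qn s A z α :=
  intervalIntegral.integral_nonneg (by norm_num) (fun θ _ => sq_nonneg _)



noncomputable def EP {r : ℕ} (A : Finset (Fin r)) (z : Fin r → ℝ)
    (p : Fin r → Polynomial ℂ) (θ : ℝ) : ℂ :=
  ∑ i ∈ A, (p i).eval (θ : ℂ) * Complex.exp (Complex.I * (z i : ℂ) * (θ : ℂ))

noncomputable def Tc (c : ℂ) (q : Polynomial ℂ) : Polynomial ℂ :=
  Polynomial.derivative q + Polynomial.C c * q


lemma term_hasDerivAt (q : Polynomial ℂ) (w : ℝ) (θ : ℝ) :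
    HasDerivAt (fun θ : ℝ => q.eval (θ : ℂ) * Complex.exp (Complex.I * (w : ℂ) * (θ : ℂ)))
      ((Tc (Complex.I * (w : ℂ)) q).eval (θ : ℂ) * Complex.exp (Complex.I * (w : ℂ) * (θ : ℂ)))
      θ := by
  have h1 : HasDerivAt (fun θ : ℝ => q.eval (θ : ℂ)) (q.derivative.eval (θ : ℂ)) θ :=
    (q.hasDerivAt (θ : ℂ)).comp_ofReal
  have h2 : HasDerivAt (fun θ : ℝ => Complex.exp (Complex.I * (w : ℂ) * (θ : ℂ)))
      (Complex.exp (Complex.I * (w : ℂ) * (θ : ℂ)) * (Complex.I * (w : ℂ))) θ := by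
    have : HasDerivAt (fun x : ℂ => Complex.exp (Complex.I * (w : ℂ) * x))
        (Complex.exp (Complex.I * (w : ℂ) * (θ : ℂ)) * (Complex.I * (w : ℂ))) (θ : ℂ) := by
      simpa using ((hasDerivAt_id ((θ : ℝ) : ℂ)).const_mul (Complex.I * (w : ℂ))).cexp
    exact this.comp_ofReal
  have := h1.fun_mul h2
  convert this using 1
  · rfl
  simp [Tc]
  ring

lemma EP_hasDerivAt (θ : ℝ) :
    HasDerivAt (EP A z p)
      (EP A z (fun i => Tc (Complex.I * (z i : ℂ)) (p i)) θ) θ := by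
  unfold EP
  exact HasDerivAt.fun_sum fun i _ => term_hasDerivAt (p i) (z i) θ

lemma EP_step_vanish {a b : ℝ} (w : ℝ)
    (h : Set.EqOn (EP A z p) 0 (Set.Ioo a b)) :
    Set.EqOn (EP A z fun i => Tc (Complex.I * ((z i : ℂ) - (w : ℂ))) (p i)) 0
      (Set.Ioo a b) := by
  intro θ hθ
  have het : EP A z p =ᶠ[nhds θ] 0 :=
    Filter.eventuallyEq_of_mem (Ioo_mem_nhds hθ.1 hθ.2) h
  have hd : deriv (EP A z p) θ = 0 := by
    rw [het.deriv_eq]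
    exact deriv_const _ _
  have h1 : EP A z (fun i => Tc (Complex.I * (z i : ℂ)) (p i)) θ = 0 := by
    rw [← (EP_hasDerivAt θ).deriv]; exact hd
  have key : EP A z (fun i => Tc (Complex.I * ((z i : ℂ) - (w : ℂ))) (p i)) θ
      = EP A z (fun i => Tc (Complex.I * (z i : ℂ)) (p i)) θ
        - Complex.I * (w : ℂ) * EP A z p θ := by
    unfold EP
    rw [Finset.mul_sum, ← Finset.sum_sub_distrib]
    refine Finset.sum_congr rfl fun i _ => ?_
    simp only [Tc, Polynomial.eval_add, Polynomial.eval_mul, Polynomial.eval_C]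
    ring
  rw [key, h1, h hθ]
  simp

set_option maxRecDepth 8000 in
lemma EP_iter_vanish {a b : ℝ} (w : ℝ) (n : ℕ)
    (h : Set.EqOn (EP A z p) 0 (Set.Ioo a b)) :
    Set.EqOn (EP A z fun i => (Tc (Complex.I * ((z i : ℂ) - (w : ℂ))))^[n] (p i)) 0
      (Set.Ioo a b) := by
  induction n with
  | zero => simpa using h
  | succ n ih =>
      have h2 := EP_step_vanish
        (p := fun i => (Tc (Complex.I * ((z i : ℂ) - (w : ℂ))))^[n] (p i))
        (A := A) (z := z) w ih
      intro θ hθ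
      have h3 := h2 hθ
      unfold EP at h3 ⊢
      simp only [Function.iterate_succ_apply']
      exact h3

lemma Tc_inj {c : ℂ} (hc : c ≠ 0) {q : Polynomial ℂ} (h : Tc c q = 0) : q = 0 := by
  by_contra hq
  have hcoeff : (Tc c q).coeff q.natDegree = c * q.leadingCoeff := by
    rw [Tc, Polynomial.coeff_add, Polynomial.coeff_C_mul, Polynomial.coeff_derivative,
      Polynomial.coeff_natDegree_succ_eq_zero, zero_mul, zero_add, Polynomial.leadingCoeff]
  rw [h] at hcoeff
  simp only [Polynomial.coeff_zero] at hcoeff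
  have := (mul_eq_zero.mp hcoeff.symm).resolve_left hc
  exact hq (Polynomial.leadingCoeff_eq_zero.mp this)

lemma Tc_iter_inj {c : ℂ} (hc : c ≠ 0) (n : ℕ) {q : Polynomial ℂ}
    (h : (Tc c)^[n] q = 0) : q = 0 := by
  induction n generalizing q with
  | zero => simpa using h
  | succ n ih =>
      rw [Function.iterate_succ_apply'] at h
      exact ih (Tc_inj hc h)

lemma EP_vanish {a b : ℝ} (hab : a < b) :
    ∀ (n r : ℕ) (A : Finset (Fin r)), A.card ≤ n → ∀ z : Fin r → ℝ, Set.InjOn z A →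
      ∀ p : Fin r → Polynomial ℂ, Set.EqOn (EP A z p) 0 (Set.Ioo a b) →
        ∀ i ∈ A, p i = 0 := by
  intro n
  induction n with
  | zero =>
      intro r A hA z _ p _ i hi
      rw [Nat.le_zero, Finset.card_eq_zero] at hA
      simp [hA] at hi
  | succ n ih =>
      intro r A hcard z hz p h i hi
      set w := z i with hw
      set N := (p i).natDegree + 1 with hN
      set q : Fin r → Polynomial ℂ :=
        fun k => (Tc (Complex.I * ((z k : ℂ) - (w : ℂ))))^[N] (p k) with hqdef
      have hq : Set.EqOn (EP A z q) 0 (Set.Ioo a b) := EP_iter_vanish w N h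
      have hqi : q i = 0 := by
        have hc0 : Complex.I * ((z i : ℂ) - (w : ℂ)) = 0 := by simp [hw]
        have hTc0 : Tc (Complex.I * ((z i : ℂ) - (w : ℂ))) = ⇑(Polynomial.derivative) := by
          funext t; rw [hc0]; simp [Tc]
        rw [hqdef]
        simp only [hTc0]
        exact Polynomial.iterate_derivative_eq_zero (by omega)
      have herase : Set.EqOn (EP (A.erase i) z q) 0 (Set.Ioo a b) := by
        intro θ hθ
        have h0 := hq hθ
        unfold EP at h0 ⊢
        rw [← Finset.add_sum_erase A _ hi, hqi] at h0
        simpa using h0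
      have hqz : ∀ k ∈ A.erase i, q k = 0 := by
        refine ih r (A.erase i) ?_ z (hz.mono (A.erase_subset i)) q herase
        have := Finset.card_erase_of_mem hi
        omega
      have hpz : ∀ k ∈ A, k ≠ i → p k = 0 := by
        intro k hk hki
        have hc : Complex.I * ((z k : ℂ) - (w : ℂ)) ≠ 0 := by
          refine mul_ne_zero Complex.I_ne_zero ?_
          rw [sub_ne_zero]
          exact_mod_cast fun hzz => hki (hz hk hi (by exact_mod_cast hzz))
        exact Tc_iter_inj hc N (hqz k (Finset.mem_erase.mpr ⟨hki, hk⟩))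
      have heval : ∀ θ ∈ Set.Ioo a b, (p i).eval ((θ : ℝ) : ℂ) = 0 := by
        intro θ hθ
        have h0 := h hθ
        unfold EP at h0
        rw [← Finset.add_sum_erase A _ hi] at h0
        have hrest : ∑ k ∈ A.erase i, (p k).eval (θ : ℂ) *
            Complex.exp (Complex.I * (z k : ℂ) * (θ : ℂ)) = 0 := by
          refine Finset.sum_eq_zero fun k hk => ?_
          rw [hpz k (Finset.mem_of_mem_erase hk) (Finset.ne_of_mem_erase hk)]
          simp
        rw [hrest, add_zero] at h0
        have h0' : (p i).eval (θ : ℂ) * Complex.exp (Complex.I * (z i : ℂ) * (θ : ℂ)) = 0 := h0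
        exact (mul_eq_zero.mp h0').resolve_right (Complex.exp_ne_zero _)
      apply Polynomial.eq_zero_of_infinite_isRoot
      have himg : ((fun x : ℝ => (x : ℂ)) '' (Set.Ioo a b)).Infinite :=
        (Set.Ioo_infinite hab).image (Complex.ofReal_injective.injOn)
      refine himg.mono ?_
      rintro x ⟨θ, hθ, rfl⟩
      exact heval θ hθ



noncomputable def pa (s : ℕ) {r : ℕ} (α : Fin r → Fin (s + 1) → ℂ) (i : Fin r) : Polynomial ℂ :=
  ∑ j : Fin (s + 1), Polynomial.C (α i j) * Polynomial.X ^ (j : ℕ)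

lemma pa_eval (i : Fin r) (θ : ℂ) :
    (pa s α i).eval θ = ∑ j : Fin (s + 1), α i j * θ ^ (j : ℕ) := by
  simp [pa, Polynomial.eval_finset_sum]

lemma Fn_eq_EP (θ : ℝ) : Fn s A z α θ = EP A z (pa s α) θ := by
  unfold Fn EP
  refine Finset.sum_congr rfl fun i _ => ?_
  rw [pa_eval, Finset.sum_mul]

lemma pa_coeff (i : Fin r) (j : Fin (s + 1)) : (pa s α i).coeff (j : ℕ) = α i j := by
  unfold pa
  rw [Polynomial.finset_sum_coeff]
  rw [Finset.sum_eq_single j]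
  · simp
  · intro b _ hb
    simp only [Polynomial.coeff_C_mul, Polynomial.coeff_X_pow]
    rw [if_neg (by simpa [Fin.val_eq_val] using Ne.symm hb)]
    ring
  · simp

lemma Fn_vanish_alpha (hz : Set.InjOn z A)
    (h : Set.EqOn (Fn s A z α) 0 (Set.Ioo (0:ℝ) 1)) :
    ∀ i ∈ A, ∀ j, α i j = 0 := by
  have hv := EP_vanish zero_lt_one A.card r A le_rfl z hz (pa s α)
    (fun θ hθ => by rw [← Fn_eq_EP]; exact h hθ)
  intro i hi j
  have hpc := pa_coeff (α := α) i j
  rw [hv i hi] at hpc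
  simpa using hpc.symm

lemma Qn_pos (hz : Set.InjOn z A) (hα : ∃ i ∈ A, ∃ j, α i j ≠ 0) :
    0 < Qn s A z α := by
  obtain ⟨i, hi, j, hj⟩ := hα
  have hne : ¬ Set.EqOn (Fn s A z α) 0 (Set.Ioo (0:ℝ) 1) :=
    fun h => hj (Fn_vanish_alpha hz h i hi j)
  have hex : ∃ θ₀ ∈ Set.Ioo (0:ℝ) 1, Fn s A z α θ₀ ≠ 0 := by
    by_contra hcon
    push_neg at hcon
    exact hne fun θ hθ => hcon θ hθ
  obtain ⟨θ₀, hθ₀, hFθ₀⟩ := hex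
  unfold Qn
  rw [intervalIntegral.integral_pos_iff_support_of_nonneg_ae
    (Filter.Eventually.of_forall fun θ => sq_nonneg _)
    (integrand_continuous.intervalIntegrable _ _)]
  refine ⟨zero_lt_one, ?_⟩
  set f := fun θ => Complex.abs (Fn s A z α θ) ^ 2 with hf
  have hopen : IsOpen (Function.support f ∩ Set.Ioo 0 1) := by
    refine IsOpen.inter ?_ isOpen_Ioo
    rw [Function.support_eq_preimage]
    exact integrand_continuous.isOpen_preimage _ (isOpen_compl_singleton)
  have hmem : θ₀ ∈ Function.support f ∩ Set.Ioo 0 1 := by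
    refine ⟨?_, hθ₀⟩
    simp only [Function.mem_support, hf]
    exact pow_ne_zero 2 (Complex.abs.ne_zero hFθ₀)
  calc (0:ENNReal) < volume (Function.support f ∩ Set.Ioo 0 1) :=
        hopen.measure_pos volume ⟨θ₀, hmem⟩
    _ ≤ volume (Function.support f ∩ Set.Ioc 0 1) :=
        measure_mono (Set.inter_subset_inter_right _ Set.Ioo_subset_Ioc_self)



lemma Fn_abs_le {θ : ℝ} (hθ : |θ| ≤ 1) :
    Complex.abs (Fn s A z α θ) ≤ ∑ i ∈ A, ∑ j : Fin (s + 1), Complex.abs (α i j) := by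
  unfold Fn
  refine (Complex.abs.sum_le _ _).trans ?_
  refine Finset.sum_le_sum fun i _ => ?_
  refine (Complex.abs.sum_le _ _).trans ?_
  refine Finset.sum_le_sum fun j _ => ?_
  rw [map_mul, map_mul, map_pow]
  have h1 : Complex.abs (θ : ℂ) ^ (j : ℕ) ≤ 1 := by
    refine pow_le_one₀ (by positivity) ?_
    rwa [Complex.abs_ofReal]
  have h2 : Complex.abs (Complex.exp (Complex.I * (z i : ℂ) * (θ : ℂ))) = 1 := by
    rw [Complex.abs_exp]
    norm_num [Complex.mul_re, Complex.mul_im]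
  rw [h2, mul_one]
  calc Complex.abs (α i j) * Complex.abs (θ:ℂ) ^ (j:ℕ)
      ≤ Complex.abs (α i j) * 1 := by
        exact mul_le_mul_of_nonneg_left h1 (Complex.abs.nonneg _)
    _ = Complex.abs (α i j) := mul_one _

lemma Fn_param_continuous (θ : ℝ) :
    Continuous fun x : (Fin r → ℝ) × (Fin r → Fin (s + 1) → ℂ) => Fn s A x.1 x.2 θ := by
  unfold Fn
  refine continuous_finset_sum _ fun i _ => continuous_finset_sum _ fun j _ => ?_
  have hc1 : Continuous fun x : (Fin r → ℝ) × (Fin r → Fin (s + 1) → ℂ) => x.2 i j :=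
    (continuous_apply j).comp ((continuous_apply i).comp continuous_snd)
  have hc2 : Continuous fun x : (Fin r → ℝ) × (Fin r → Fin (s + 1) → ℂ) => x.1 i :=
    (continuous_apply i).comp continuous_fst
  exact ((hc1.mul continuous_const).mul
    (Complex.continuous_exp.comp
      ((continuous_const.mul (Complex.continuous_ofReal.comp hc2)).mul continuous_const)))

lemma Qn_continuous :
    Continuous fun x : (Fin r → ℝ) × (Fin r → Fin (s + 1) → ℂ) => Qn s A x.1 x.2 := by
  rw [continuous_iff_continuousAt]
  intro x₀
  set B : ℝ := ∑ i ∈ A, ∑ j : Fin (s + 1), (Complex.abs (x₀.2 i j) + 1) with hB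
  have hB0 : 0 ≤ B := Finset.sum_nonneg fun i _ => Finset.sum_nonneg fun j _ => by positivity
  apply intervalIntegral.continuousAt_of_dominated_interval (bound := fun _ => B ^ 2)
  · exact Filter.Eventually.of_forall fun x =>
      (integrand_continuous (z := x.1) (α := x.2)).aestronglyMeasurable
  · filter_upwards [Metric.ball_mem_nhds x₀ zero_lt_one] with x hx
    refine Filter.Eventually.of_forall fun θ hθ => ?_
    have hθ1 : |θ| ≤ 1 := by
      rw [Set.uIoc_of_le zero_le_one] at hθ
      exact abs_le.mpr ⟨by linarith [hθ.1], hθ.2⟩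
    have hab : Complex.abs (Fn s A x.1 x.2 θ) ≤ B := by
      refine (Fn_abs_le hθ1).trans ?_
      rw [hB]
      refine Finset.sum_le_sum fun i _ => Finset.sum_le_sum fun j _ => ?_
      have hd : Complex.abs (x.2 i j - x₀.2 i j) < 1 := by
        rw [← Complex.norm_eq_abs, ← Complex.dist_eq]
        calc dist (x.2 i j) (x₀.2 i j) ≤ dist (x.2 i) (x₀.2 i) := dist_le_pi_dist _ _ j
          _ ≤ dist x.2 x₀.2 := dist_le_pi_dist _ _ i
          _ ≤ dist x x₀ := by rw [Prod.dist_eq]; exact le_max_right _ _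
          _ < 1 := hx
      calc Complex.abs (x.2 i j)
          ≤ Complex.abs (x₀.2 i j) + Complex.abs (x.2 i j - x₀.2 i j) := by
            simpa using Complex.abs.add_le (x₀.2 i j) (x.2 i j - x₀.2 i j)
        _ ≤ Complex.abs (x₀.2 i j) + 1 := by linarith
    rw [Real.norm_eq_abs, abs_of_nonneg (sq_nonneg _)]
    exact pow_le_pow_left₀ (Complex.abs.nonneg _) hab 2
  · exact intervalIntegrable_const
  · refine Filter.Eventually.of_forall fun θ _ => ?_
    exact ((Complex.continuous_abs.comp (Fn_param_continuous θ)).pow 2).continuousAt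



lemma exp_hasDerivAt (Δ : ℝ) (θ : ℝ) :
    HasDerivAt (fun θ : ℝ => Complex.exp (Complex.I * (Δ : ℂ) * (θ : ℂ)))
      (Complex.exp (Complex.I * (Δ : ℂ) * (θ : ℂ)) * (Complex.I * (Δ : ℂ))) θ := by
  have : HasDerivAt (fun x : ℂ => Complex.exp (Complex.I * (Δ : ℂ) * x))
      (Complex.exp (Complex.I * (Δ : ℂ) * (θ : ℂ)) * (Complex.I * (Δ : ℂ))) (θ : ℂ) := by
    simpa using ((hasDerivAt_id ((θ : ℝ) : ℂ)).const_mul (Complex.I * (Δ : ℂ))).cexp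
  exact this.comp_ofReal

lemma abs_exp_eq_one (Δ θ : ℝ) :
    Complex.abs (Complex.exp (Complex.I * (Δ : ℂ) * (θ : ℂ))) = 1 := by
  rw [Complex.abs_exp]
  norm_num [Complex.mul_re, Complex.mul_im]

lemma E_bound (m : ℕ) (Δ : ℝ) (hΔ : Δ ≠ 0) :
    Complex.abs (∫ θ in (0:ℝ)..1, (θ:ℂ) ^ m * Complex.exp (Complex.I * (Δ:ℂ) * (θ:ℂ)))
      ≤ (m + 2) / |Δ| := by
  have hΔ0 : (0:ℝ) < |Δ| := abs_pos.mpr hΔ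
  have hIΔ : Complex.I * (Δ:ℂ) ≠ 0 :=
    mul_ne_zero Complex.I_ne_zero (by exact_mod_cast hΔ)
  have habsIΔ : Complex.abs (Complex.I * (Δ:ℂ)) = |Δ| := by
    rw [map_mul, Complex.abs_I, Complex.abs_ofReal, one_mul]
  set v : ℝ → ℂ := fun θ => Complex.exp (Complex.I * (Δ:ℂ) * (θ:ℂ)) / (Complex.I * (Δ:ℂ))
    with hv
  set u : ℝ → ℂ := fun θ => (θ:ℂ) ^ m with hu
  set u' : ℝ → ℂ := fun θ => (m:ℂ) * (θ:ℂ) ^ (m - 1) with hu'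
  have hud : ∀ θ ∈ Set.uIcc (0:ℝ) 1, HasDerivAt u (u' θ) θ := fun θ _ =>
    (hasDerivAt_pow m ((θ:ℝ):ℂ)).comp_ofReal
  have hvd : ∀ θ ∈ Set.uIcc (0:ℝ) 1,
      HasDerivAt v (Complex.exp (Complex.I * (Δ:ℂ) * (θ:ℂ))) θ := by
    intro θ _
    have := (exp_hasDerivAt Δ θ).div_const (Complex.I * (Δ:ℂ))
    simpa [mul_div_assoc, div_self hIΔ] using this
  have hu'c : Continuous u' := by fun_prop
  have hvc : Continuous fun θ : ℝ => Complex.exp (Complex.I * (Δ:ℂ) * (θ:ℂ)) := by fun_prop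
  have hint := intervalIntegral.integral_mul_deriv_eq_deriv_mul hud hvd
    (hu'c.intervalIntegrable _ _) (hvc.intervalIntegrable _ _)
  have habsv : ∀ θ : ℝ, Complex.abs (v θ) = 1 / |Δ| := by
    intro θ
    rw [hv]
    simp only [map_div₀, habsIΔ, abs_exp_eq_one]
  have h3 : ‖∫ θ in (0:ℝ)..1, u' θ * v θ‖ ≤ m / |Δ| := by
    have hb : ∀ θ ∈ Set.uIoc (0:ℝ) 1, ‖u' θ * v θ‖ ≤ m / |Δ| := by
      intro θ hθ
      rw [Set.uIoc_of_le zero_le_one] at hθ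
      rw [norm_mul, Complex.norm_eq_abs, Complex.norm_eq_abs, habsv, hu']
      simp only [map_mul, Complex.abs_natCast, map_pow, Complex.abs_ofReal]
      have hθ1 : |θ| ≤ 1 := abs_le.mpr ⟨by linarith [hθ.1], hθ.2⟩
      have : |θ| ^ (m - 1) ≤ 1 := pow_le_one₀ (abs_nonneg _) hθ1
      calc (m:ℝ) * |θ| ^ (m-1) * (1 / |Δ|) ≤ (m:ℝ) * 1 * (1 / |Δ|) := by
            have h0 : (0:ℝ) ≤ 1 / |Δ| := by positivity
            have := mul_le_mul_of_nonneg_left this (Nat.cast_nonneg m (α := ℝ))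
            exact mul_le_mul_of_nonneg_right this h0
        _ = m / |Δ| := by ring
    calc ‖∫ θ in (0:ℝ)..1, u' θ * v θ‖ ≤ (m / |Δ|) * |1 - 0| :=
          intervalIntegral.norm_integral_le_of_norm_le_const hb
      _ = m / |Δ| := by norm_num
  rw [show (∫ θ in (0:ℝ)..1, (θ:ℂ) ^ m * Complex.exp (Complex.I * (Δ:ℂ) * (θ:ℂ)))
      = ∫ θ in (0:ℝ)..1, u θ * Complex.exp (Complex.I * (Δ:ℂ) * (θ:ℂ)) from rfl, hint]
  rw [← Complex.norm_eq_abs]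
  have hn1 : ‖u 1 * v 1‖ ≤ 1 / |Δ| := by
    rw [norm_mul, Complex.norm_eq_abs, Complex.norm_eq_abs, habsv, hu]
    simp
  have hn0 : ‖u 0 * v 0‖ ≤ 1 / |Δ| := by
    rw [norm_mul, Complex.norm_eq_abs, Complex.norm_eq_abs, habsv, hu]
    simp only [Complex.ofReal_zero]
    rcases Nat.eq_zero_or_pos m with hm | hm
    · simp [hm]
    · rw [zero_pow (by omega)]
      simp only [map_zero, zero_mul]
      positivity
  calc ‖u 1 * v 1 - u 0 * v 0 - ∫ θ in (0:ℝ)..1, u' θ * v θ‖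
      ≤ ‖u 1 * v 1 - u 0 * v 0‖ + ‖∫ θ in (0:ℝ)..1, u' θ * v θ‖ := norm_sub_le _ _
    _ ≤ (‖u 1 * v 1‖ + ‖u 0 * v 0‖) + ‖∫ θ in (0:ℝ)..1, u' θ * v θ‖ := by
        have := norm_sub_le (u 1 * v 1) (u 0 * v 0)
        linarith
    _ ≤ (1 / |Δ| + 1 / |Δ|) + m / |Δ| := by linarith
    _ = (m + 2) / |Δ| := by field_simp; ring



lemma prod_expand (B C : Finset (Fin r)) (θ : ℝ) :
    Fn s B z α θ * (starRingEnd ℂ) (Fn s C z α θ) =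
      ∑ i ∈ B, ∑ k ∈ C, ∑ j : Fin (s + 1), ∑ l : Fin (s + 1),
        (α i j * (starRingEnd ℂ) (α k l)) *
          ((θ:ℂ) ^ ((j:ℕ) + (l:ℕ)) * Complex.exp (Complex.I * ((z i - z k : ℝ):ℂ) * (θ:ℂ))) := by
  unfold Fn
  rw [map_sum, Finset.sum_mul_sum]
  refine Finset.sum_congr rfl fun i _ => ?_
  refine Finset.sum_congr rfl fun k _ => ?_
  rw [map_sum, Finset.sum_mul_sum]
  refine Finset.sum_congr rfl fun j _ => ?_
  refine Finset.sum_congr rfl fun l _ => ?_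
  simp only [map_mul, map_pow, Complex.conj_ofReal]
  rw [← Complex.exp_conj]
  simp only [map_mul, Complex.conj_I, Complex.conj_ofReal]
  rw [show Complex.exp (Complex.I * ((z i - z k : ℝ):ℂ) * (θ:ℂ))
      = Complex.exp (Complex.I * ((z i : ℝ):ℂ) * (θ:ℂ)) *
        Complex.exp (-Complex.I * ((z k : ℝ):ℂ) * (θ:ℂ)) by
    rw [← Complex.exp_add]; congr 1; push_cast; ring]
  rw [pow_add]
  ring

lemma term_cont (c : ℂ) (n : ℕ) (d : ℝ) :
    Continuous fun θ : ℝ => c * ((θ:ℂ) ^ n * Complex.exp (Complex.I * (d:ℂ) * (θ:ℂ))) := by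
  fun_prop

lemma cross_eq (B C : Finset (Fin r)) :
    (∫ θ in (0:ℝ)..1, Fn s B z α θ * (starRingEnd ℂ) (Fn s C z α θ)) =
      ∑ i ∈ B, ∑ k ∈ C, ∑ j : Fin (s + 1), ∑ l : Fin (s + 1),
        (α i j * (starRingEnd ℂ) (α k l)) *
          (∫ θ in (0:ℝ)..1,
            (θ:ℂ) ^ ((j:ℕ) + (l:ℕ)) * Complex.exp (Complex.I * ((z i - z k : ℝ):ℂ) * (θ:ℂ))) := by
  rw [intervalIntegral.integral_congr (g := fun θ =>
    ∑ i ∈ B, ∑ k ∈ C, ∑ j : Fin (s + 1), ∑ l : Fin (s + 1),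
      (α i j * (starRingEnd ℂ) (α k l)) *
        ((θ:ℂ) ^ ((j:ℕ) + (l:ℕ)) * Complex.exp (Complex.I * ((z i - z k : ℝ):ℂ) * (θ:ℂ))))
    (fun θ _ => prod_expand B C θ)]
  rw [intervalIntegral.integral_finset_sum (fun i _ => (Continuous.intervalIntegrable (by
    exact continuous_finset_sum _ fun k _ => continuous_finset_sum _ fun j _ =>
      continuous_finset_sum _ fun l _ => term_cont _ _ _) _ _))]
  refine Finset.sum_congr rfl fun i _ => ?_
  rw [intervalIntegral.integral_finset_sum (fun k _ => (Continuous.intervalIntegrable (by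
    exact continuous_finset_sum _ fun j _ => continuous_finset_sum _ fun l _ => term_cont _ _ _) _ _))]
  refine Finset.sum_congr rfl fun k _ => ?_
  rw [intervalIntegral.integral_finset_sum (fun j _ => (Continuous.intervalIntegrable (by
    exact continuous_finset_sum _ fun l _ => term_cont _ _ _) _ _))]
  refine Finset.sum_congr rfl fun j _ => ?_
  rw [intervalIntegral.integral_finset_sum (fun l _ => (term_cont _ _ _).intervalIntegrable _ _)]
  refine Finset.sum_congr rfl fun l _ => ?_
  rw [intervalIntegral.integral_const_mul]

lemma cross_bound (B C : Finset (Fin r)) (M : ℝ) (hM : 0 < M)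
    (hsep : ∀ i ∈ B, ∀ k ∈ C, M ≤ |z i - z k|) :
    Complex.abs (∫ θ in (0:ℝ)..1, Fn s B z α θ * (starRingEnd ℂ) (Fn s C z α θ))
      ≤ (2 * s + 2) / M * ((∑ i ∈ B, ∑ j : Fin (s + 1), Complex.abs (α i j)) *
        (∑ k ∈ C, ∑ l : Fin (s + 1), Complex.abs (α k l))) := by
  rw [cross_eq]
  calc Complex.abs (∑ i ∈ B, ∑ k ∈ C, ∑ j : Fin (s + 1), ∑ l : Fin (s + 1),
        (α i j * (starRingEnd ℂ) (α k l)) *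
          (∫ θ in (0:ℝ)..1, (θ:ℂ) ^ ((j:ℕ)+(l:ℕ)) *
            Complex.exp (Complex.I * ((z i - z k : ℝ):ℂ) * (θ:ℂ))))
      ≤ ∑ i ∈ B, ∑ k ∈ C, ∑ j : Fin (s + 1), ∑ l : Fin (s + 1),
        Complex.abs (α i j) * Complex.abs (α k l) * ((2 * s + 2) / M) := by
        refine (Complex.abs.sum_le _ _).trans (Finset.sum_le_sum fun i hi => ?_)
        refine (Complex.abs.sum_le _ _).trans (Finset.sum_le_sum fun k hk => ?_)
        refine (Complex.abs.sum_le _ _).trans (Finset.sum_le_sum fun j _ => ?_)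
        refine (Complex.abs.sum_le _ _).trans (Finset.sum_le_sum fun l _ => ?_)
        rw [map_mul, map_mul, Complex.abs_conj]
        refine mul_le_mul_of_nonneg_left ?_ (by positivity)
        have hzik : z i - z k ≠ 0 := by
          have := hsep i hi k hk
          intro h0
          rw [h0, abs_zero] at this
          linarith
        refine (E_bound _ _ hzik).trans ?_
        have hj : (j:ℕ) ≤ s := Nat.lt_succ_iff.mp j.isLt
        have hl : (l:ℕ) ≤ s := Nat.lt_succ_iff.mp l.isLt
        refine div_le_div₀ (by positivity) ?_ hM (hsep i hi k hk)
        push_cast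
        have : ((j:ℕ) : ℝ) + ((l:ℕ) : ℝ) ≤ 2 * s := by
          have := (Nat.cast_le (α := ℝ)).2 hj
          have := (Nat.cast_le (α := ℝ)).2 hl
          linarith
        linarith
    _ = (2 * s + 2) / M * ((∑ i ∈ B, ∑ j : Fin (s + 1), Complex.abs (α i j)) *
        (∑ k ∈ C, ∑ l : Fin (s + 1), Complex.abs (α k l))) := by
        rw [Finset.sum_mul_sum, Finset.mul_sum]
        refine Finset.sum_congr rfl fun i _ => ?_
        rw [Finset.mul_sum]
        refine Finset.sum_congr rfl fun k _ => ?_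
        rw [Finset.sum_mul_sum, Finset.mul_sum]
        refine Finset.sum_congr rfl fun j _ => ?_
        rw [Finset.mul_sum]
        refine Finset.sum_congr rfl fun l _ => ?_
        ring

-- decomposition
lemma Qn_split (B : Finset (Fin r)) (hB : B ⊆ A) :
    Qn s A z α = Qn s B z α + Qn s (A \ B) z α +
      2 * (∫ θ in (0:ℝ)..1, Fn s B z α θ * (starRingEnd ℂ) (Fn s (A \ B) z α θ)).re := by
  have hFn : ∀ θ : ℝ, Fn s A z α θ = Fn s B z α θ + Fn s (A \ B) z α θ := by
    intro θ
    unfold Fn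
    exact ((Finset.sum_sdiff hB).symm.trans (add_comm _ _))
  have hpt : ∀ θ : ℝ, Complex.abs (Fn s A z α θ) ^ 2 =
      Complex.abs (Fn s B z α θ) ^ 2 + Complex.abs (Fn s (A\B) z α θ) ^ 2 +
        2 * (Fn s B z α θ * (starRingEnd ℂ) (Fn s (A\B) z α θ)).re := by
    intro θ
    rw [hFn θ]
    simp only [Complex.sq_abs]
    exact Complex.normSq_add _ _
  unfold Qn
  rw [intervalIntegral.integral_congr (g := fun θ =>
      Complex.abs (Fn s B z α θ) ^ 2 + Complex.abs (Fn s (A\B) z α θ) ^ 2 +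
        2 * (Fn s B z α θ * (starRingEnd ℂ) (Fn s (A\B) z α θ)).re) (fun θ _ => hpt θ)]
  have hc1 : Continuous fun θ => Complex.abs (Fn s B z α θ) ^ 2 :=
    (Complex.continuous_abs.comp Fn_continuous).pow 2
  have hc2 : Continuous fun θ => Complex.abs (Fn s (A\B) z α θ) ^ 2 :=
    (Complex.continuous_abs.comp Fn_continuous).pow 2
  have hc3 : Continuous fun θ =>
      2 * (Fn s B z α θ * (starRingEnd ℂ) (Fn s (A\B) z α θ)).re :=
    continuous_const.mul
      (Complex.continuous_re.comp (Fn_continuous.mul (continuous_star.comp Fn_continuous)))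
  rw [intervalIntegral.integral_add
      (f := fun θ => Complex.abs (Fn s B z α θ) ^ 2 + Complex.abs (Fn s (A\B) z α θ) ^ 2)
      ((hc1.add hc2).intervalIntegrable _ _)
    (hc3.intervalIntegrable _ _),
    intervalIntegral.integral_add (hc1.intervalIntegrable _ _) (hc2.intervalIntegrable _ _),
    intervalIntegral.integral_const_mul]
  congr 1
  have hint : IntervalIntegrable
      (fun θ => Fn s B z α θ * (starRingEnd ℂ) (Fn s (A \ B) z α θ)) volume 0 1 :=
    (Fn_continuous.mul (continuous_star.comp Fn_continuous)).intervalIntegrable _ _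
  have hre := Complex.reCLM.intervalIntegral_comp_comm hint
  simp only [Complex.reCLM_apply] at hre
  rw [hre]



lemma Fn_congr_z {z' : Fin r → ℝ} (hz : ∀ i ∈ A, z i = z' i) (θ : ℝ) :
    Fn s A z α θ = Fn s A z' α θ := by
  unfold Fn
  exact Finset.sum_congr rfl fun i hi => by rw [hz i hi]

lemma Sg_pos_exists (hα : Sg s A α ≠ 0) : ∃ i ∈ A, ∃ j, α i j ≠ 0 := by
  by_contra hcon
  push_neg at hcon
  exact hα (Finset.sum_eq_zero fun i hi => Finset.sum_eq_zero fun j _ => by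
    rw [hcon i hi j]; simp)

lemma sg_single_le {i : Fin r} (hi : i ∈ A) (j : Fin (s + 1)) :
    Complex.abs (α i j) ^ 2 ≤ Sg s A α := by
  unfold Sg
  calc Complex.abs (α i j) ^ 2
      ≤ ∑ j' : Fin (s + 1), Complex.abs (α i j') ^ 2 :=
        Finset.single_le_sum (f := fun j' => Complex.abs (α i j') ^ 2)
          (fun j' _ => sq_nonneg _) (Finset.mem_univ j)
    _ ≤ ∑ i' ∈ A, ∑ j' : Fin (s + 1), Complex.abs (α i' j') ^ 2 :=
        Finset.single_le_sum (f := fun i' => ∑ j' : Fin (s + 1), Complex.abs (α i' j') ^ 2)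
          (fun i' _ => Finset.sum_nonneg fun j' _ => sq_nonneg _) hi

lemma compact_case (s r : ℕ) (A : Finset (Fin r)) (e D : ℝ) (he : 0 < e) :
    ∃ c : ℝ, 0 < c ∧ ∀ z : Fin r → ℝ,
      (∀ i ∈ A, ∀ j ∈ A, i ≠ j → e ≤ |z i - z j|) →
      (∀ i ∈ A, |z i| ≤ D) →
      ∀ α : Fin r → Fin (s + 1) → ℂ, c * Sg s A α ≤ Qn s A z α := by
  classical
  set X := (Fin r → ℝ) × (Fin r → Fin (s + 1) → ℂ)
  set K : Set X := {x | (∀ i ∈ A, ∀ j ∈ A, i ≠ j → e ≤ |x.1 i - x.1 j|) ∧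
      (∀ i ∈ A, |x.1 i| ≤ D) ∧ (∀ i, i ∉ A → x.1 i = 0) ∧
      (∀ i, i ∉ A → x.2 i = 0) ∧ Sg s A x.2 = 1} with hK
  -- K is closed
  have hKcl : IsClosed K := by
    rw [hK]
    refine IsClosed.inter ?_ (IsClosed.inter ?_ (IsClosed.inter ?_ (IsClosed.inter ?_ ?_)))
    · show IsClosed {x : X | ∀ i ∈ A, ∀ j ∈ A, i ≠ j → e ≤ |x.1 i - x.1 j|}
      rw [Set.setOf_forall]
      refine isClosed_iInter fun i => ?_
      rw [show {x : X | i ∈ A → ∀ j ∈ A, i ≠ j → e ≤ |x.1 i - x.1 j|}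
          = ⋂ j, {x : X | i ∈ A → j ∈ A → i ≠ j → e ≤ |x.1 i - x.1 j|} by
        ext x; simp [Set.mem_iInter]; tauto]
      refine isClosed_iInter fun j => ?_
      by_cases hc : i ∈ A ∧ j ∈ A ∧ i ≠ j
      · have : {x : X | i ∈ A → j ∈ A → i ≠ j → e ≤ |x.1 i - x.1 j|}
            = {x : X | e ≤ |x.1 i - x.1 j|} := by
          ext x; simp [hc.1, hc.2.1, hc.2.2]
        rw [this]
        exact isClosed_le continuous_const
          (((continuous_apply i).comp continuous_fst).sub
            ((continuous_apply j).comp continuous_fst)).abs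
      · have : {x : X | i ∈ A → j ∈ A → i ≠ j → e ≤ |x.1 i - x.1 j|} = Set.univ := by
          ext x; simp; tauto
        rw [this]; exact isClosed_univ
    · show IsClosed {x : X | ∀ i ∈ A, |x.1 i| ≤ D}
      rw [Set.setOf_forall]
      refine isClosed_iInter fun i => ?_
      by_cases hc : i ∈ A
      · have : {x : X | i ∈ A → |x.1 i| ≤ D} = {x : X | |x.1 i| ≤ D} := by ext x; simp [hc]
        rw [this]
        exact isClosed_le ((continuous_apply i).comp continuous_fst).abs continuous_const
      · have : {x : X | i ∈ A → |x.1 i| ≤ D} = Set.univ := by ext x; simp [hc]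
        rw [this]; exact isClosed_univ
    · show IsClosed {x : X | ∀ i, i ∉ A → x.1 i = 0}
      rw [Set.setOf_forall]
      refine isClosed_iInter fun i => ?_
      by_cases hc : i ∈ A
      · have : {x : X | i ∉ A → x.1 i = 0} = Set.univ := by ext x; simp [hc]
        rw [this]; exact isClosed_univ
      · have : {x : X | i ∉ A → x.1 i = 0} = {x : X | x.1 i = 0} := by ext x; simp [hc]
        rw [this]
        exact isClosed_eq ((continuous_apply i).comp continuous_fst) continuous_const
    · show IsClosed {x : X | ∀ i, i ∉ A → x.2 i = 0}
      rw [Set.setOf_forall]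
      refine isClosed_iInter fun i => ?_
      by_cases hc : i ∈ A
      · have : {x : X | i ∉ A → x.2 i = 0} = Set.univ := by ext x; simp [hc]
        rw [this]; exact isClosed_univ
      · have : {x : X | i ∉ A → x.2 i = 0} = {x : X | x.2 i = 0} := by ext x; simp [hc]
        rw [this]
        exact isClosed_eq ((continuous_apply i).comp continuous_snd) continuous_const
    · show IsClosed {x : X | Sg s A x.2 = 1}
      refine isClosed_eq ?_ continuous_const
      refine continuous_finset_sum _ fun i _ => continuous_finset_sum _ fun j _ => ?_
      exact (Complex.continuous_abs.comp
        ((continuous_apply j).comp ((continuous_apply i).comp continuous_snd))).pow 2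
  -- K is bounded
  have hKbd : Bornology.IsBounded K := by
    rw [Metric.isBounded_iff_subset_closedBall 0]
    refine ⟨max (max D 0) 1, fun x hx => ?_⟩
    obtain ⟨hsep, hbd, hz0, hα0, hsg⟩ := hx
    rw [Metric.mem_closedBall, dist_zero_right, Prod.norm_def]
    refine max_le ?_ ?_
    · refine (pi_norm_le_iff_of_nonneg (by positivity)).2 fun i => ?_
      by_cases hc : i ∈ A
      · rw [Real.norm_eq_abs]
        exact (hbd i hc).trans ((le_max_left D 0).trans (le_max_left _ _))
      · rw [hz0 i hc, norm_zero]; positivity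
    · refine (pi_norm_le_iff_of_nonneg (by positivity)).2 fun i => ?_
      refine (pi_norm_le_iff_of_nonneg (by positivity)).2 fun j => ?_
      by_cases hc : i ∈ A
      · have h1 : Complex.abs (x.2 i j) ^ 2 ≤ 1 := by
          rw [← hsg]; exact sg_single_le hc j
        have h2 : Complex.abs (x.2 i j) ≤ 1 := by nlinarith [Complex.abs.nonneg (x.2 i j)]
        rw [Complex.norm_eq_abs]
        exact h2.trans (le_max_right _ _)
      · rw [hα0 i hc, Pi.zero_apply, norm_zero]; positivity
  have hKcpt : IsCompact K := Metric.isCompact_iff_isClosed_bounded.mpr ⟨hKcl, hKbd⟩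
  -- normalization map
  have hmem : ∀ (z : Fin r → ℝ), (∀ i ∈ A, ∀ j ∈ A, i ≠ j → e ≤ |z i - z j|) →
      (∀ i ∈ A, |z i| ≤ D) → ∀ (α : Fin r → Fin (s + 1) → ℂ), Sg s A α ≠ 0 →
      ((fun i => if i ∈ A then z i else 0,
        fun i j => if i ∈ A then ((Real.sqrt (Sg s A α))⁻¹ : ℂ) * α i j else 0) : X) ∈ K := by
    intro z hsep hbd α hα
    have ht : 0 < Sg s A α := lt_of_le_of_ne Sg_nonneg (Ne.symm hα)
    refine ⟨?_, ?_, ?_, ?_, ?_⟩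
    · intro i hi j hj hij; simp only [if_pos hi, if_pos hj]; exact hsep i hi j hj hij
    · intro i hi; simp only [if_pos hi]; exact hbd i hi
    · intro i hi; simp only [if_neg hi]
    · intro i hi; funext j; simp only [if_neg hi, Pi.zero_apply]
    · show Sg s A (fun i j => if i ∈ A then ((Real.sqrt (Sg s A α))⁻¹ : ℂ) * α i j else 0) = 1
      set t := Sg s A α with htdef
      unfold Sg
      calc ∑ i ∈ A, ∑ j : Fin (s + 1),
            Complex.abs (if i ∈ A then ((Real.sqrt t)⁻¹ : ℂ) * α i j else 0) ^ 2
          = ∑ i ∈ A, ∑ j : Fin (s + 1),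
            (Real.sqrt t)⁻¹ ^ 2 * Complex.abs (α i j) ^ 2 := by
            refine Finset.sum_congr rfl fun i hi => Finset.sum_congr rfl fun j _ => ?_
            rw [if_pos hi, map_mul, mul_pow, map_inv₀, Complex.abs_ofReal,
              abs_of_nonneg (Real.sqrt_nonneg _)]
        _ = (Real.sqrt t)⁻¹ ^ 2 * t := by
            rw [htdef]
            unfold Sg
            rw [Finset.mul_sum]
            exact Finset.sum_congr rfl fun i _ => by rw [Finset.mul_sum]
        _ = 1 := by
            rw [inv_pow, Real.sq_sqrt ht.le, inv_mul_cancel₀ hα]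
  -- main argument
  rcases Set.eq_empty_or_nonempty K with hKe | hKne
  · refine ⟨1, one_pos, fun z hsep hbd α => ?_⟩
    by_cases hα : Sg s A α = 0
    · rw [hα, mul_zero]; exact Qn_nonneg
    · exact absurd (hmem z hsep hbd α hα) (by rw [hKe]; exact Set.notMem_empty _)
  · obtain ⟨x₀, hx₀K, hx₀min'⟩ := hKcpt.exists_isMinOn hKne Qn_continuous.continuousOn
    have hx₀min : ∀ y ∈ K, Qn s A x₀.1 x₀.2 ≤ Qn s A y.1 y.2 := fun y hy => hx₀min' hy
    obtain ⟨hsep₀, hbd₀, hz₀, hα₀, hsg₀⟩ := hx₀K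
    have hc0 : 0 < Qn s A x₀.1 x₀.2 := by
      apply Qn_pos
      · intro i hi j hj hzz
        by_contra hij
        have h1 := hsep₀ i hi j hj hij
        rw [hzz, sub_self, abs_zero] at h1
        linarith
      · exact Sg_pos_exists (by rw [hsg₀]; exact one_ne_zero)
    refine ⟨Qn s A x₀.1 x₀.2, hc0, fun z hsep hbd α => ?_⟩
    by_cases hα : Sg s A α = 0
    · rw [hα, mul_zero]; exact Qn_nonneg
    · have ht : 0 < Sg s A α := lt_of_le_of_ne Sg_nonneg (Ne.symm hα)
      have hKm := hmem z hsep hbd α hα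
      have hmin := hx₀min _ hKm
      set t := Sg s A α with htdef
      have hQ : Qn s A (fun i => if i ∈ A then z i else 0)
          (fun i j => if i ∈ A then ((Real.sqrt t)⁻¹ : ℂ) * α i j else 0)
          = (Real.sqrt t)⁻¹ ^ 2 * Qn s A z α := by
        unfold Qn
        rw [← intervalIntegral.integral_const_mul]
        refine intervalIntegral.integral_congr fun θ hθ => ?_
        have hFn : Fn s A (fun i => if i ∈ A then z i else 0)
            (fun i j => if i ∈ A then ((Real.sqrt t)⁻¹ : ℂ) * α i j else 0) θ
            = ((Real.sqrt t)⁻¹ : ℂ) * Fn s A z α θ := by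
          unfold Fn
          rw [Finset.mul_sum]
          refine Finset.sum_congr rfl fun i hi => ?_
          rw [Finset.mul_sum]
          refine Finset.sum_congr rfl fun j _ => ?_
          simp only [if_pos hi]
          ring
        rw [hFn, map_mul, mul_pow, map_inv₀, Complex.abs_ofReal,
          abs_of_nonneg (Real.sqrt_nonneg _)]
      rw [hQ, inv_pow, Real.sq_sqrt ht.le] at hmin
      have := mul_le_mul_of_nonneg_right hmin ht.le
      calc Qn s A x₀.1 x₀.2 * t ≤ t⁻¹ * Qn s A z α * t := this
        _ = Qn s A z α := by field_simp



lemma split_or_bounded {r : ℕ} (A : Finset (Fin r)) (hA : A.Nonempty) (z : Fin r → ℝ)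
    (M : ℝ) (hM : 0 < M) :
    (∃ B : Finset (Fin r), B ⊆ A ∧ B.Nonempty ∧ B ≠ A ∧
      ∀ i ∈ B, ∀ k ∈ A \ B, M ≤ |z i - z k|) ∨
    (∃ t : ℝ, ∀ i ∈ A, t ≤ z i ∧ z i ≤ t + A.card * M) := by
  classical
  set m := A.inf' hA z with hm
  set B : ℕ → Finset (Fin r) := fun k => A.filter (fun i => z i ≤ m + k * M) with hB
  have hmono : ∀ {k k' : ℕ}, k ≤ k' → B k ⊆ B k' := by
    intro k k' hkk' i hi
    rw [hB, Finset.mem_filter] at hi ⊢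
    have hle : (k:ℝ) * M ≤ (k':ℝ) * M :=
      mul_le_mul_of_nonneg_right (by exact_mod_cast hkk') hM.le
    exact ⟨hi.1, le_trans hi.2 (by linarith)⟩
  have hBsub : ∀ k, B k ⊆ A := fun k => Finset.filter_subset _ _
  obtain ⟨i₀, hi₀A, hi₀⟩ := A.exists_mem_eq_inf' hA z
  have hB0 : i₀ ∈ B 0 := by
    rw [hB]
    refine Finset.mem_filter.mpr ⟨hi₀A, ?_⟩
    simp [← hi₀, ← hm]
  have hBne : ∀ k, (B k).Nonempty := fun k => ⟨i₀, hmono (Nat.zero_le k) hB0⟩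
  by_cases hsplit : ∃ k, k < A.card ∧ B k ≠ A ∧ B (k + 1) = B k
  · obtain ⟨k, _, hkA, hkeq⟩ := hsplit
    refine Or.inl ⟨B k, hBsub k, hBne k, hkA, ?_⟩
    intro i hi x hx
    have hiz : z i ≤ m + k * M := (Finset.mem_filter.mp hi).2
    have hxA : x ∈ A := (Finset.mem_sdiff.mp hx).1
    have hxnB : x ∉ B k := (Finset.mem_sdiff.mp hx).2
    have hxnB' : x ∉ B (k + 1) := by rw [hkeq]; exact hxnB
    have hxz : ¬ z x ≤ m + (k + 1 : ℕ) * M := by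
      intro h
      exact hxnB' (Finset.mem_filter.mpr ⟨hxA, h⟩)
    push_neg at hxz
    have hcast : ((k + 1 : ℕ) : ℝ) * M = (k : ℝ) * M + M := by push_cast; ring
    rw [hcast] at hxz
    have : M ≤ z x - z i := by linarith
    calc M ≤ z x - z i := this
      _ ≤ |z x - z i| := le_abs_self _
      _ = |z i - z x| := abs_sub_comm _ _
  · push_neg at hsplit
    have haux : ∀ k, k ≤ A.card → B k = A ∨ k + 1 ≤ (B k).card := by
      intro k
      induction k with
      | zero =>
          intro _
          by_cases h : B 0 = A
          · exact Or.inl h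
          · exact Or.inr (Finset.card_pos.mpr (hBne 0))
      | succ k ih =>
          intro hk
          rcases ih (by omega) with h | h
          · left
            exact Finset.Subset.antisymm (hBsub _) (h ▸ hmono (Nat.le_succ k))
          · by_cases hA' : B (k + 1) = A
            · exact Or.inl hA'
            · right
              have hne : B (k + 1) ≠ B k := by
                intro heq
                by_cases hBkA : B k = A
                · exact hA' (heq.trans hBkA)
                · exact hsplit k (by omega) hBkA heq
              have hss : B k ⊂ B (k + 1) :=
                Finset.ssubset_iff_subset_ne.mpr ⟨hmono (Nat.le_succ k), fun h => hne h.symm⟩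
              have := Finset.card_lt_card hss
              omega
    have hfin : B A.card = A := by
      rcases haux A.card le_rfl with h | h
      · exact h
      · have := Finset.card_le_card (hBsub A.card)
        omega
    refine Or.inr ⟨m, fun i hi => ⟨Finset.inf'_le _ hi, ?_⟩⟩
    have : i ∈ B A.card := hfin.symm ▸ hi
    exact (Finset.mem_filter.mp this).2

lemma cs_bound {r s : ℕ} (A : Finset (Fin r)) (g : Fin r → Fin (s + 1) → ℝ)
    (hg : ∀ i j, 0 ≤ g i j) :
    (∑ i ∈ A, ∑ j : Fin (s + 1), g i j) ^ 2 ≤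
      (A.card * (s + 1)) * ∑ i ∈ A, ∑ j : Fin (s + 1), g i j ^ 2 := by
  have h1 : ∑ p ∈ A ×ˢ (Finset.univ : Finset (Fin (s + 1))), g p.1 p.2
      = ∑ i ∈ A, ∑ j : Fin (s + 1), g i j := Finset.sum_product _ _ _
  have h2 : ∑ p ∈ A ×ˢ (Finset.univ : Finset (Fin (s + 1))), g p.1 p.2 ^ 2
      = ∑ i ∈ A, ∑ j : Fin (s + 1), g i j ^ 2 := Finset.sum_product _ _ _
  rw [← h1, ← h2]
  have := sq_sum_le_card_mul_sum_sq
    (s := A ×ˢ (Finset.univ : Finset (Fin (s + 1)))) (f := fun p => g p.1 p.2)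
  calc (∑ p ∈ A ×ˢ Finset.univ, g p.1 p.2) ^ 2
      ≤ (A ×ˢ (Finset.univ : Finset (Fin (s + 1)))).card *
          ∑ p ∈ A ×ˢ Finset.univ, g p.1 p.2 ^ 2 := this
    _ = (A.card * (s + 1)) * ∑ p ∈ A ×ˢ Finset.univ, g p.1 p.2 ^ 2 := by
        rw [Finset.card_product]
        simp

lemma Qn_shift {s r : ℕ} (A : Finset (Fin r)) (z : Fin r → ℝ)
    (α : Fin r → Fin (s + 1) → ℂ) (t : ℝ) :
    Qn s A (fun i => z i - t) α = Qn s A z α := by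
  unfold Qn
  refine intervalIntegral.integral_congr fun θ _ => ?_
  have hFn : Fn s A (fun i => z i - t) α θ
      = Complex.exp (-(Complex.I * (t:ℂ) * (θ:ℂ))) * Fn s A z α θ := by
    unfold Fn
    rw [Finset.mul_sum]
    refine Finset.sum_congr rfl fun i _ => ?_
    rw [Finset.mul_sum]
    refine Finset.sum_congr rfl fun j _ => ?_
    rw [show Complex.exp (-(Complex.I * (t:ℂ) * (θ:ℂ))) *
        (α i j * (θ:ℂ) ^ (j:ℕ) * Complex.exp (Complex.I * (z i : ℂ) * (θ:ℂ)))
        = α i j * (θ:ℂ) ^ (j:ℕ) * (Complex.exp (-(Complex.I * (t:ℂ) * (θ:ℂ))) *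
          Complex.exp (Complex.I * (z i : ℂ) * (θ:ℂ))) by ring, ← Complex.exp_add]
    congr 2
    push_cast
    ring
  have habs : Complex.abs (Complex.exp (-(Complex.I * (t:ℂ) * (θ:ℂ)))) = 1 := by
    rw [show -(Complex.I * (t:ℂ) * (θ:ℂ)) = Complex.I * ((-t : ℝ):ℂ) * (θ:ℂ) by
      push_cast; ring]
    exact abs_exp_eq_one (-t) θ
  rw [hFn, map_mul, habs, one_mul]

theorem main (s : ℕ) (e : ℝ) (he : 0 < e) :
    ∀ (n r : ℕ) (A : Finset (Fin r)), A.card ≤ n →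
      ∃ c : ℝ, 0 < c ∧ ∀ z : Fin r → ℝ,
        (∀ i ∈ A, ∀ k ∈ A, i ≠ k → e ≤ |z i - z k|) →
        ∀ α : Fin r → Fin (s + 1) → ℂ, c * Sg s A α ≤ Qn s A z α := by
  intro n
  induction n with
  | zero =>
      intro r A hA
      rw [Nat.le_zero, Finset.card_eq_zero] at hA
      subst hA
      refine ⟨1, one_pos, fun z _ α => ?_⟩
      have : Sg s (∅ : Finset (Fin r)) α = 0 := Finset.sum_empty
      rw [this, mul_zero]
      exact Qn_nonneg
  | succ n ih =>
      intro r A hcard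
      by_cases hsmall : A.card ≤ n
      · exact ih r A hsmall
      have hcardA : A.card = n + 1 := by omega
      have hAne : A.Nonempty := Finset.card_pos.mp (by omega)
      classical
      have cfun_ex : ∀ B : Finset (Fin r), ∃ c : ℝ, 0 < c ∧ (B.card ≤ n → ∀ z : Fin r → ℝ,
          (∀ i ∈ B, ∀ k ∈ B, i ≠ k → e ≤ |z i - z k|) →
          ∀ α : Fin r → Fin (s + 1) → ℂ, c * Sg s B α ≤ Qn s B z α) := by
        intro B
        by_cases h : B.card ≤ n
        · obtain ⟨c, hc, hspec⟩ := ih r B h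
          exact ⟨c, hc, fun _ => hspec⟩
        · exact ⟨1, one_pos, fun h' => absurd h' h⟩
      choose cfun cfun_pos cfun_spec using cfun_ex
      set P := A.powerset.filter (fun B => B.Nonempty ∧ B ≠ A) with hPdef
      set cmin : ℝ := if hPne : P.Nonempty then P.inf' hPne cfun else 1 with hcmin
      have cmin_pos : 0 < cmin := by
        rw [hcmin]
        split_ifs with h
        · rw [Finset.lt_inf'_iff]
          exact fun B _ => cfun_pos B
        · exact one_pos
      have cmin_le : ∀ B ∈ P, cmin ≤ cfun B := by
        intro B hB
        rw [hcmin, dif_pos ⟨B, hB⟩]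
        exact Finset.inf'_le _ hB
      set K1 : ℝ := 2 * ((2 * s + 2) * (A.card * (s + 1))) with hK1
      have hcardpos : (0:ℝ) < A.card := by
        have : 0 < A.card := by omega
        exact_mod_cast this
      have hK1pos : 0 < K1 := by
        rw [hK1]
        have h1 : (0:ℝ) < 2 * s + 2 := by positivity
        have h2 : (0:ℝ) < (s:ℝ) + 1 := by positivity
        exact mul_pos two_pos (mul_pos h1 (mul_pos hcardpos h2))
      set M : ℝ := max 1 (2 * K1 / cmin) with hMdef
      have hMpos : (0:ℝ) < M := lt_of_lt_of_le one_pos (le_max_left _ _)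
      have hKM : K1 / M ≤ cmin / 2 := by
        have h2 : 2 * K1 / cmin ≤ M := le_max_right _ _
        rw [div_le_div_iff₀ hMpos (by norm_num)]
        have hcm : cmin * (2 * K1 / cmin) = 2 * K1 := by field_simp
        nlinarith [mul_le_mul_of_nonneg_left h2 cmin_pos.le]
      set D : ℝ := ((n:ℝ) + 1) * M with hDdef
      obtain ⟨ccpt, hccpt, hcpt⟩ := compact_case s r A e D he
      refine ⟨min (cmin / 2) ccpt, lt_min (by linarith) hccpt, ?_⟩
      intro z hsep α
      have hSgnn : (0:ℝ) ≤ Sg s A α := Sg_nonneg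
      rcases split_or_bounded A hAne z M hMpos with ⟨B, hBA, hBne, hBneA, hgap⟩ | ⟨t, hbd⟩
      · -- split case
        set C := A \ B with hC
        have hCA : C ⊆ A := Finset.sdiff_subset
        have hCne : C.Nonempty := by
          rw [hC, Finset.sdiff_nonempty]
          intro hAB
          exact hBneA (Finset.Subset.antisymm hBA hAB)
        have hBP : B ∈ P := Finset.mem_filter.mpr ⟨Finset.mem_powerset.mpr hBA, hBne, hBneA⟩
        have hCneA : C ≠ A := by
          obtain ⟨b, hb⟩ := hBne
          intro h
          have hbC : b ∈ C := h.symm ▸ hBA hb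
          rw [hC, Finset.mem_sdiff] at hbC
          exact hbC.2 hb
        have hCP : C ∈ P := Finset.mem_filter.mpr ⟨Finset.mem_powerset.mpr hCA, hCne, hCneA⟩
        have hBcard : B.card ≤ n := by
          have := Finset.card_lt_card (Finset.ssubset_iff_subset_ne.mpr ⟨hBA, hBneA⟩)
          omega
        have hCcard : C.card ≤ n := by
          have := Finset.card_lt_card (Finset.ssubset_iff_subset_ne.mpr ⟨hCA, hCneA⟩)
          omega
        have hsepB : ∀ i ∈ B, ∀ k ∈ B, i ≠ k → e ≤ |z i - z k| :=
          fun i hi k hk => hsep i (hBA hi) k (hBA hk)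
        have hsepC : ∀ i ∈ C, ∀ k ∈ C, i ≠ k → e ≤ |z i - z k| :=
          fun i hi k hk => hsep i (hCA hi) k (hCA hk)
        have hQB' := cfun_spec B hBcard z hsepB α
        have hQC' := cfun_spec C hCcard z hsepC α
        have hQB : cmin * Sg s B α ≤ Qn s B z α :=
          le_trans (mul_le_mul_of_nonneg_right (cmin_le B hBP) Sg_nonneg) hQB'
        have hQC : cmin * Sg s C α ≤ Qn s C z α :=
          le_trans (mul_le_mul_of_nonneg_right (cmin_le C hCP) Sg_nonneg) hQC'
        have hsplit := Qn_split (s := s) (z := z) (α := α) B hBA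
        rw [← hC] at hsplit
        have hcross := cross_bound (s := s) (z := z) (α := α) B C M hMpos
          (fun i hi k hk => hgap i hi k hk)
        set R := (∫ θ in (0:ℝ)..1, Fn s B z α θ * (starRingEnd ℂ) (Fn s C z α θ)).re with hR
        have habsR : |R| ≤ (2 * s + 2) / M *
            ((∑ i ∈ B, ∑ j : Fin (s + 1), Complex.abs (α i j)) *
             (∑ k ∈ C, ∑ l : Fin (s + 1), Complex.abs (α k l))) :=
          le_trans (Complex.abs_re_le_abs _) hcross
        set SA := ∑ i ∈ A, ∑ j : Fin (s + 1), Complex.abs (α i j) with hSA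
        set SB := ∑ i ∈ B, ∑ j : Fin (s + 1), Complex.abs (α i j) with hSB
        set SC := ∑ k ∈ C, ∑ l : Fin (s + 1), Complex.abs (α k l) with hSC
        have hSBnn : 0 ≤ SB := Finset.sum_nonneg fun i _ =>
          Finset.sum_nonneg fun j _ => Complex.abs.nonneg _
        have hSCnn : 0 ≤ SC := Finset.sum_nonneg fun i _ =>
          Finset.sum_nonneg fun j _ => Complex.abs.nonneg _
        have hSB_le : SB ≤ SA := Finset.sum_le_sum_of_subset_of_nonneg hBA
          (fun i _ _ => Finset.sum_nonneg fun j _ => Complex.abs.nonneg _)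
        have hSC_le : SC ≤ SA := Finset.sum_le_sum_of_subset_of_nonneg hCA
          (fun i _ _ => Finset.sum_nonneg fun j _ => Complex.abs.nonneg _)
        have hCS := cs_bound A (fun i j => Complex.abs (α i j))
          (fun i j => Complex.abs.nonneg _)
        have hX1 : SB * SC ≤ SA ^ 2 := by nlinarith
        have hX2 : (2 * (s:ℝ) + 2) / M * (SB * SC)
            ≤ (2 * (s:ℝ) + 2) / M * ((A.card * ((s:ℝ) + 1)) * Sg s A α) := by
          refine mul_le_mul_of_nonneg_left ?_ (div_nonneg (by positivity) hMpos.le)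
          refine hX1.trans ?_
          have hSgeq : Sg s A α = ∑ i ∈ A, ∑ j : Fin (s+1), Complex.abs (α i j) ^ 2 := rfl
          rw [hSgeq]
          exact hCS
        have hX3 : 2 * ((2 * (s:ℝ) + 2) / M * ((A.card * ((s:ℝ) + 1)) * Sg s A α))
            = K1 / M * Sg s A α := by
          rw [hK1]
          field_simp
        have hX4 : K1 / M * Sg s A α ≤ cmin / 2 * Sg s A α :=
          mul_le_mul_of_nonneg_right hKM hSgnn
        have hSg : Sg s C α + Sg s B α = Sg s A α := Finset.sum_sdiff hBA
        have hQsum : cmin * Sg s B α + cmin * Sg s C α = cmin * Sg s A α := by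
          rw [← hSg]; ring
        have hmin1 : min (cmin / 2) ccpt * Sg s A α ≤ cmin / 2 * Sg s A α :=
          mul_le_mul_of_nonneg_right (min_le_left _ _) hSgnn
        have hRlb : -((2 * (s:ℝ) + 2) / M * (SB * SC)) ≤ R := by
          have := abs_le.mp habsR
          linarith [this.1]
        rw [hsplit]
        linarith
      · -- bounded case
        have hsep' : ∀ i ∈ A, ∀ k ∈ A, i ≠ k → e ≤ |(z i - t) - (z k - t)| := by
          intro i hi k hk hik
          rw [sub_sub_sub_cancel_right]
          exact hsep i hi k hk hik
        have hbd' : ∀ i ∈ A, |z i - t| ≤ D := by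
          intro i hi
          obtain ⟨h1, h2⟩ := hbd i hi
          have hcc : (A.card : ℝ) = (n:ℝ) + 1 := by exact_mod_cast hcardA
          rw [abs_le]
          constructor
          · have : (0:ℝ) ≤ D := by rw [hDdef]; positivity
            linarith
          · rw [hDdef]
            rw [hcc] at h2
            linarith
        have hres := hcpt (fun i => z i - t) hsep' hbd' α
        rw [Qn_shift A z α t] at hres
        calc min (cmin / 2) ccpt * Sg s A α ≤ ccpt * Sg s A α :=
              mul_le_mul_of_nonneg_right (min_le_right _ _) hSgnn
          _ ≤ Qn s A z α := hres

end S15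

open MeasureTheory Real

/-- Lower bound for exponential-type polynomials: if `z_1,…,z_r` are `ε`-separated and
`F(θ) = ∑_{i=1}^r ∑_{j=0}^s α_{i,j} θ^j e^{i z_i θ}`, then
`∫₀¹ |F(θ)|² dθ ≥ c ∑_{i,j} |α_{i,j}|²` with `c = c(r,s,ε) > 0`. -/
theorem statement15 (r s : ℕ) (hr : 1 ≤ r) (e : ℝ) (he : 0 < e) :
    ∃ c : ℝ, 0 < c ∧ ∀ z : Fin r → ℝ,
      (∀ i j, i ≠ j → e ≤ |z i - z j|) →
      ∀ α : Fin r → Fin (s + 1) → ℂ,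
        c * ∑ i : Fin r, ∑ j : Fin (s + 1), ‖α i j‖ ^ 2 ≤
          ∫ θ in (0:ℝ)..1,
            ‖∑ i : Fin r, ∑ j : Fin (s + 1),
              α i j * (θ : ℂ) ^ (j : ℕ) *
                Complex.exp (Complex.I * (z i : ℂ) * (θ : ℂ))‖ ^ 2 := by
  obtain ⟨c, hc, h⟩ := S15.main s e he r r Finset.univ (by simp)
  refine ⟨c, hc, fun z hz α => ?_⟩
  exact h z (fun i _ k _ hik => hz i k hik) α
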